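/- If x₀ is T-periodic, then a satisfies a(t + T) = a(T) + a(t) · b(T) for all t. -/

import Mathlib

open Matrix

noncomputable section

/-- The perpendicular vector field on ℝ²: `(v₁, v₂) ↦ (v₂, −v₁)`. -/
def perp (v : Fin 2 → ℝ) : Fin 2 → ℝ := ![v 1, -v 0]

/-- The Jacobian matrix of `f : ℝ² → ℝ²` at a point `x`: entry `(i, j)` is `∂fᵢ/∂xⱼ (x)`. -/
def jac (f : (Fin 2 → ℝ) → (Fin 2 → ℝ)) (x : Fin 2 → ℝ) : Matrix (Fin 2) (Fin 2) ℝ :=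
  Matrix.of fun i j => fderiv ℝ f x (Pi.single j 1) i

/-- The divergence of `f : ℝ² → ℝ²`, i.e. the trace of its Jacobian. -/
def divg (f : (Fin 2 → ℝ) → (Fin 2 → ℝ)) (x : Fin 2 → ℝ) : ℝ := (jac f x).trace

/-- Diliberto's function `b(t) = exp(∫₀ᵗ (div f)(x₀ s) ds)`. -/
def bD (f : (Fin 2 → ℝ) → (Fin 2 → ℝ)) (x₀ : ℝ → (Fin 2 → ℝ)) (t : ℝ) : ℝ :=
  Real.exp (∫ s in (0:ℝ)..t, divg f (x₀ s))

/-- Diliberto's function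
`a(t) = ∫₀ᵗ [f(x₀ s)ᵀ (A s + (A s)ᵀ) f⊥(x₀ s) / ‖f(x₀ s)‖⁴] b(s) ds`
(here `‖v‖² = v ⬝ᵥ v` is the square of the euclidean norm). -/
def aD (f : (Fin 2 → ℝ) → (Fin 2 → ℝ)) (x₀ : ℝ → (Fin 2 → ℝ)) (t : ℝ) : ℝ :=
  ∫ s in (0:ℝ)..t,
    (f (x₀ s) ⬝ᵥ ((jac f (x₀ s) + (jac f (x₀ s))ᵀ).mulVec (perp (f (x₀ s)))) /
      (f (x₀ s) ⬝ᵥ f (x₀ s)) ^ 2) * bD f x₀ s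

/-- For a `T`-periodic solution `x₀`, the function `a` satisfies
`a(t + T) = a(T) + a(t) · b(T)`. -/
theorem aD_translation
    (f : (Fin 2 → ℝ) → (Fin 2 → ℝ)) (x₀ : ℝ → (Fin 2 → ℝ)) (T : ℝ)
    (hf : ContDiff ℝ 1 f)
    (hx : ∀ t, HasDerivAt x₀ (f (x₀ t)) t)
    (hfne : ∀ t, f (x₀ t) ≠ 0)
    (hT : 0 < T)
    (hper : ∀ t, x₀ (t + T) = x₀ t) :
    ∀ t, aD f x₀ (t + T) = aD f x₀ T + aD f x₀ t * bD f x₀ T := by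
  intro t
  -- continuity facts
  have hx0 : Continuous x₀ :=
    continuous_iff_continuousAt.2 fun s => (hx s).continuousAt
  have hfx : Continuous fun s => f (x₀ s) := hf.continuous.comp hx0
  have hjac : Continuous fun s => jac f (x₀ s) := by
    have hfd : Continuous fun s => fderiv ℝ f (x₀ s) :=
      (hf.continuous_fderiv one_ne_zero).comp hx0
    apply continuous_matrix
    intro i j
    exact (continuous_apply i).comp (hfd.clm_apply continuous_const)
  have hdiv : Continuous fun s => divg f (x₀ s) := hjac.matrix_trace
  have hperp : Continuous fun s => perp (f (x₀ s)) := by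
    refine continuous_pi fun i => ?_
    fin_cases i
    · simpa [perp, Function.comp_def] using (continuous_apply (1 : Fin 2)).comp hfx
    · simp only [perp]
      exact ((continuous_apply (0 : Fin 2)).comp hfx).neg
  have hnum : Continuous fun s =>
      f (x₀ s) ⬝ᵥ ((jac f (x₀ s) + (jac f (x₀ s))ᵀ).mulVec (perp (f (x₀ s)))) :=
    hfx.dotProduct ((hjac.add hjac.matrix_transpose).matrix_mulVec hperp)
  have hden : ∀ s, ((f (x₀ s) ⬝ᵥ f (x₀ s)) ^ 2 : ℝ) ≠ 0 := by
    intro s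
    have : f (x₀ s) ⬝ᵥ f (x₀ s) ≠ 0 := by
      rw [Ne, dotProduct_self_eq_zero]
      exact hfne s
    positivity
  have hbD : Continuous (bD f x₀) := by
    unfold bD
    exact Real.continuous_exp.comp
      (intervalIntegral.continuous_primitive
        (fun a b => (hdiv.intervalIntegrable a b)) 0)
  set g : ℝ → ℝ := fun s =>
    (f (x₀ s) ⬝ᵥ ((jac f (x₀ s) + (jac f (x₀ s))ᵀ).mulVec (perp (f (x₀ s)))) /
      (f (x₀ s) ⬝ᵥ f (x₀ s)) ^ 2) * bD f x₀ s with hg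
  have hgc : Continuous g := by
    refine ((hnum.div ?_ hden).mul hbD)
    exact (hfx.dotProduct hfx).pow 2
  -- periodicity of b : b(u+T) = b(T) * b(u)
  have hbshift : ∀ u, bD f x₀ (u + T) = bD f x₀ T * bD f x₀ u := by
    intro u
    unfold bD
    rw [← Real.exp_add]
    congr 1
    have h1 : (∫ s in (0:ℝ)..(u + T), divg f (x₀ s)) =
        (∫ s in (0:ℝ)..T, divg f (x₀ s)) + ∫ s in T..(u + T), divg f (x₀ s) :=
      (intervalIntegral.integral_add_adjacent_intervals
        (hdiv.intervalIntegrable 0 T) (hdiv.intervalIntegrable T (u + T))).symm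
    have h2 : (∫ s in T..(u + T), divg f (x₀ s)) = ∫ s in (0:ℝ)..u, divg f (x₀ s) := by
      have := intervalIntegral.integral_comp_add_right (a := (0:ℝ)) (b := u)
        (fun s => divg f (x₀ s)) T
      simp only [zero_add] at this
      rw [← this]
      congr 1
      ext s
      rw [hper]
    rw [h1, h2]
  -- integrand g shifts by factor b(T)
  have hgshift : ∀ u, g (u + T) = bD f x₀ T * g u := by
    intro u
    simp only [hg, hper u, hbshift u]
    ring
  -- main computation
  have h1 : aD f x₀ (t + T) = aD f x₀ T + ∫ s in T..(t + T), g s := by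
    unfold aD
    exact (intervalIntegral.integral_add_adjacent_intervals
      (hgc.intervalIntegrable 0 T) (hgc.intervalIntegrable T (t + T))).symm
  have h2 : (∫ s in T..(t + T), g s) = ∫ s in (0:ℝ)..t, g (s + T) := by
    have := intervalIntegral.integral_comp_add_right (a := (0:ℝ)) (b := t) g T
    simp only [zero_add] at this
    rw [this]
  have h3 : (∫ s in (0:ℝ)..t, g (s + T)) = bD f x₀ T * ∫ s in (0:ℝ)..t, g s := by
    rw [← intervalIntegral.integral_const_mul]
    congr 1
    ext s
    exact hgshift s
  have h4 : aD f x₀ t = ∫ s in (0:ℝ)..t, g s := rfl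
  rw [h1, h2, h3, h4]
  ring

end
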